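/- arXiv:math/9703223 — 2 statements merged into one kernel-verified Lean document; each statement's English description precedes it below -/
import Mathlib

section
/- Let K be a field of characteristic zero, T a transcendental element over K (a variable), and τ ∈ K nonzero. Then the three formal power series 1, T, and exp(τT) = Σ (τT)ⁱ/i! in K[[T]] are algebraically independent over K; equivalently, T and exp(τT) are algebraically independent over K. -/
set_option linter.unusedSectionVars false

open PowerSeries Polynomial Finset

namespace Stmt5Aux

variable {K : Type*} [Field K] [CharZero K]

noncomputable def E (τ : K) : K⟦X⟧ :=
  PowerSeries.mk (fun i => τ ^ i / (Nat.factorial i : K))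

lemma E_ne_zero (τ : K) : E τ ≠ 0 := by
  intro h
  have : PowerSeries.coeff 0 (E τ) = 0 := by rw [h, map_zero]
  simp [E] at this

lemma deriv_E (τ : K) : d⁄dX K (E τ) = PowerSeries.C τ * E τ := by
  ext n
  rw [PowerSeries.coeff_derivative]
  simp only [E, PowerSeries.coeff_mk, PowerSeries.coeff_C_mul]
  rw [pow_succ, Nat.factorial_succ]
  have h1 : ((Nat.factorial n : K)) ≠ 0 := Nat.cast_ne_zero.2 (Nat.factorial_ne_zero n)
  have h2 : ((n : K) + 1) ≠ 0 := by
    have := Nat.cast_ne_zero (R := K).2 (Nat.succ_ne_zero n)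
    push_cast at this; exact this
  push_cast
  field_simp

lemma deriv_E_pow (τ : K) (j : ℕ) :
    d⁄dX K ((E τ) ^ j) = PowerSeries.C ((j : K) * τ) * (E τ) ^ j := by
  induction j with
  | zero => simp
  | succ n ih =>
    rw [pow_succ, Derivation.leibniz, ih, deriv_E]
    simp only [smul_eq_mul]
    push_cast
    rw [show ((n : K) + 1) * τ = (n : K) * τ + τ by ring, map_add]
    ring

lemma poly_ode {a b : K[X]} {s : K} (ha : a ≠ 0) (hs : s ≠ 0)
    (h : a * (derivative b + Polynomial.C s * b) - derivative a * b = 0) : b = 0 := by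
  by_contra hb
  have key : Polynomial.C s * (a * b) = derivative a * b - a * derivative b := by
    linear_combination h
  have hab : a.degree ≠ ⊥ := by simpa [Polynomial.degree_eq_bot] using ha
  have hbb : b.degree ≠ ⊥ := by simpa [Polynomial.degree_eq_bot] using hb
  have hlhs : (Polynomial.C s * (a * b)).degree = a.degree + b.degree := by
    rw [degree_mul, degree_mul, degree_C hs, zero_add]
  have h1 : (derivative a * b).degree < a.degree + b.degree :=
    lt_of_le_of_lt (degree_mul_le _ _)
      (WithBot.add_lt_add_right hbb (degree_derivative_lt ha))
  have h2 : (a * derivative b).degree < a.degree + b.degree := by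
    by_cases hb' : derivative b = 0
    · rw [hb', mul_zero, degree_zero]
      exact Ne.bot_lt (by simp [WithBot.add_eq_bot, hab, hbb])
    · exact lt_of_le_of_lt (degree_mul_le _ _)
        (WithBot.add_lt_add_left hab (degree_derivative_lt hb))
  have : (derivative a * b - a * derivative b).degree < a.degree + b.degree :=
    lt_of_le_of_lt (degree_sub_le _ _) (max_lt h1 h2)
  rw [key] at hlhs
  exact absurd hlhs (ne_of_lt this)

lemma key (τ : K) (hτ : τ ≠ 0) : ∀ n (c : ℕ → K[X]),
    (∑ j ∈ Finset.range (n + 1), (c j : K⟦X⟧) * (E τ) ^ j = 0) → ∀ j ≤ n, c j = 0 := by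
  intro n
  induction n with
  | zero =>
    intro c h j hj
    interval_cases j
    rw [Finset.sum_range_one, pow_zero, mul_one] at h
    exact Polynomial.coe_eq_zero_iff.mp h
  | succ n ih =>
    intro c h
    have tail : ∀ c' : ℕ → K[X], c' 0 = 0 →
        (∑ j ∈ range (n + 2), (c' j : K⟦X⟧) * (E τ) ^ j = 0) → ∀ j ≤ n + 1, c' j = 0 := by
      intro c' h0 hsum j hj
      rw [Finset.sum_range_succ'] at hsum
      rw [h0] at hsum
      simp only [Polynomial.coe_zero, zero_mul, add_zero] at hsum
      have hfac : (E τ) * ∑ i ∈ range (n + 1), (c' (i + 1) : K⟦X⟧) * (E τ) ^ i = 0 := by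
        rw [Finset.mul_sum, ← hsum]
        apply Finset.sum_congr rfl
        intro i _
        rw [pow_succ]; ring
      have hz := (mul_eq_zero.mp hfac).resolve_left (E_ne_zero τ)
      rcases Nat.eq_zero_or_pos j with rfl | hjpos
      · exact h0
      · obtain ⟨i, rfl⟩ : ∃ i, j = i + 1 := ⟨j - 1, by omega⟩
        exact ih _ hz i (by omega)
    by_cases h0 : c 0 = 0
    · exact tail c h0 h
    · exfalso
      have hD : ∑ j ∈ range (n + 2),
          ((Polynomial.derivative (c j) : K⟦X⟧)
            + PowerSeries.C ((j : K) * τ) * (c j : K⟦X⟧)) * (E τ) ^ j = 0 := by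
        have hh := congrArg (d⁄dX K) h
        rw [map_sum, map_zero] at hh
        rw [← hh]
        apply Finset.sum_congr rfl
        intro j _
        rw [Derivation.leibniz, deriv_E_pow, PowerSeries.derivative_coe]
        simp only [smul_eq_mul]
        ring
      set d : ℕ → K[X] := fun j =>
        c 0 * (Polynomial.derivative (c j) + Polynomial.C ((j : K) * τ) * c j)
          - Polynomial.derivative (c 0) * c j with hd
      have hdsum : ∑ j ∈ range (n + 2), (d j : K⟦X⟧) * (E τ) ^ j = 0 := by
        calc ∑ j ∈ range (n + 2), (d j : K⟦X⟧) * (E τ) ^ j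
            = (c 0 : K⟦X⟧) * ∑ j ∈ range (n + 2),
                ((Polynomial.derivative (c j) : K⟦X⟧)
                  + PowerSeries.C ((j : K) * τ) * (c j : K⟦X⟧)) * (E τ) ^ j
              - (Polynomial.derivative (c 0) : K⟦X⟧)
                * ∑ j ∈ range (n + 2), (c j : K⟦X⟧) * (E τ) ^ j := by
              rw [Finset.mul_sum, Finset.mul_sum, ← Finset.sum_sub_distrib]
              apply Finset.sum_congr rfl
              intro j _
              simp only [hd, Polynomial.coe_sub, Polynomial.coe_mul, Polynomial.coe_add,
                Polynomial.coe_C]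
              ring
          _ = 0 := by rw [hD, h, mul_zero, mul_zero, sub_zero]
      have hd0 : d 0 = 0 := by
        simp only [hd, Nat.cast_zero, zero_mul, map_zero]
        ring
      have hdz := tail d hd0 hdsum
      have hcz : ∀ j, 1 ≤ j → j ≤ n + 1 → c j = 0 := by
        intro j h1 h2
        have hjτ : ((j : K) * τ) ≠ 0 :=
          mul_ne_zero (Nat.cast_ne_zero.2 (by omega)) hτ
        exact poly_ode h0 hjτ (hdz j h2)
      apply h0
      have hsum0 : ∑ j ∈ range (n + 2), (c j : K⟦X⟧) * (E τ) ^ j = (c 0 : K⟦X⟧) := by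
        rw [Finset.sum_range_succ']
        have : ∀ i ∈ range (n + 1), (c (i + 1) : K⟦X⟧) * (E τ) ^ (i + 1) = 0 := by
          intro i hi
          rw [hcz (i + 1) (by omega) (by have := Finset.mem_range.mp hi; omega)]
          simp
        rw [Finset.sum_congr rfl this]
        simp
      rw [h] at hsum0
      exact Polynomial.coe_eq_zero_iff.mp hsum0.symm

omit [CharZero K] in
lemma aeval_X_eq_coe (f : K[X]) :
    Polynomial.aeval (PowerSeries.X : K⟦X⟧) f = (f : K⟦X⟧) := by
  have hC : algebraMap K K⟦X⟧ = PowerSeries.C := by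
    ext1 r
    rw [PowerSeries.algebraMap_apply]
    simp
  rw [Polynomial.aeval_def, hC, Polynomial.eval₂_C_X_eq_coe]

lemma transcendental_X : Transcendental K (PowerSeries.X : K⟦X⟧) := by
  rw [transcendental_iff]
  intro p hp
  rw [aeval_X_eq_coe] at hp
  exact Polynomial.coe_eq_zero_iff.mp hp

lemma transcendental_E (τ : K) (hτ : τ ≠ 0) :
    Transcendental (Algebra.adjoin K (Set.range ![(PowerSeries.X : K⟦X⟧)])) (E τ) := by
  rw [transcendental_iff]
  intro p hp
  have hrange : Set.range ![(PowerSeries.X : K⟦X⟧)] = {PowerSeries.X} := by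
    ext y; simp [Matrix.range_cons, Matrix.range_empty]
  -- choose polynomial representatives of the coefficients
  have hmem : ∀ j, ∃ f : K[X], (f : K⟦X⟧) = ((p.coeff j : _) : K⟦X⟧) := by
    intro j
    have h2 : ((p.coeff j : _) : K⟦X⟧) ∈ (Polynomial.aeval (R := K) (PowerSeries.X : K⟦X⟧)).range := by
      rw [← Algebra.adjoin_singleton_eq_range_aeval K, ← hrange]
      exact (p.coeff j).2
    obtain ⟨f, hf⟩ := h2
    exact ⟨f, by rw [← aeval_X_eq_coe]; exact hf⟩
  choose c hc using hmem
  have hsum : ∑ j ∈ range (p.natDegree + 1), (c j : K⟦X⟧) * (E τ) ^ j = 0 := by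
    rw [← hp, Polynomial.aeval_eq_sum_range]
    apply Finset.sum_congr rfl
    intro j _
    rw [hc j, Algebra.smul_def]
    rfl
  have hzero := key τ hτ p.natDegree c hsum
  apply Polynomial.ext
  intro n
  rw [Polynomial.coeff_zero]
  rcases le_or_gt n p.natDegree with hn | hn
  · have hcoe : ((p.coeff n : _) : K⟦X⟧) = 0 := by rw [← hc n, hzero n hn]; simp
    exact (ZeroMemClass.coe_eq_zero).mp hcoe
  · exact Polynomial.coeff_eq_zero_of_natDegree_lt hn

end Stmt5Aux

open PowerSeries in
/-- `T` and `exp (τ T)` are algebraically independent over `K` inside `K[[T]]`. -/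
theorem stmt5 {K : Type*} [Field K] [CharZero K] (τ : K) (hτ : τ ≠ 0) :
    AlgebraicIndependent K
      ![(PowerSeries.X : PowerSeries K),
        PowerSeries.mk (fun i => τ ^ i / (Nat.factorial i : K))] := by
  have h1 : AlgebraicIndependent K ![(PowerSeries.X : PowerSeries K)] := by
    rw [algebraicIndependent_unique_type_iff]
    simpa using Stmt5Aux.transcendental_X (K := K)
  have h2 := (h1.option_iff_transcendental (Stmt5Aux.E τ)).2 (Stmt5Aux.transcendental_E τ hτ)
  have hf : Function.Injective (![some 0, none] : Fin 2 → Option (Fin 1)) := by decide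
  have h3 := h2.comp _ hf
  have heq : (fun o : Option (Fin 1) => o.elim (Stmt5Aux.E τ) ![(PowerSeries.X : PowerSeries K)])
      ∘ (![some 0, none] : Fin 2 → Option (Fin 1))
      = ![(PowerSeries.X : PowerSeries K),
          PowerSeries.mk (fun i => τ ^ i / (Nat.factorial i : K))] := by
    funext i
    fin_cases i <;> rfl
  rwa [heq] at h3
end

section
/- Let R be the valuation ring of a non-archimedean field K with maximal ideal ℘, let B° be an R-algebra, q° a prime of B° with q° ∩ R = (0), and suppose for every b in B = B° ⊗_R K there is a nonzero π ∈ ℘ with πb ∈ B° (i.e., B° generates B over K). If q° is maximal among ideals I with q° ⊆ I ⊆ q̄ and I ∩ R = (0) for a maximal ideal q̄ of B° containing ℘B°, then q°B is a maximal ideal of B; in particular B/q°B is a field. -/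
attribute [local instance] Algebra.TensorProduct.rightAlgebra

open TensorProduct in
/-- Step in Lemma 4.2: if `q°` is maximal among ideals below `q̄` with zero
contraction to `R`, then `q°B` is a maximal ideal of `B = B° ⊗_R K`. -/
theorem stmt10 {R : Type*} [CommRing R] [IsDomain R] [ValuationRing R]
    (hp : IsLocalRing.maximalIdeal R ≠ ⊥)
    {B0 : Type*} [CommRing B0] [Algebra R B0] [Module.Flat R B0]
    (hgen : ∀ b : (FractionRing R) ⊗[R] B0,
      ∃ π : R, π ≠ 0 ∧ π ∈ IsLocalRing.maximalIdeal R ∧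
        ∃ b0 : B0, π • b = Algebra.TensorProduct.includeRight b0)
    (qbar : Ideal B0) (hqbar : qbar.IsMaximal)
    (hwpq : (IsLocalRing.maximalIdeal R).map (algebraMap R B0) ≤ qbar)
    (q : Ideal B0) (hqprime : q.IsPrime) (hqR : q.comap (algebraMap R B0) = ⊥)
    (hq : q ≤ qbar)
    (hmax : ∀ I : Ideal B0, q ≤ I → I ≤ qbar →
      I.comap (algebraMap R B0) = ⊥ → I = q) :
    (q.map (Algebra.TensorProduct.includeRight
        (R := R) (A := FractionRing R) (B := B0)).toRingHom).IsMaximal := by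
  classical
  set K := FractionRing R
  set B := K ⊗[R] B0
  set M : Submonoid B0 := Algebra.algebraMapSubmonoid B0 (nonZeroDivisors R)
  -- B is the localization of B0 at M
  have hbc : IsBaseChange K (TensorProduct.mk R K B0 1) := TensorProduct.isBaseChange R B0 K
  have hlocmod : IsLocalizedModule (nonZeroDivisors R)
      (IsScalarTower.toAlgHom R B0 B).toLinearMap := by
    rw [isLocalizedModule_iff_isBaseChange (S := nonZeroDivisors R) (A := K)]
    exact hbc
  have hloc : IsLocalization M B :=
    isLocalizedModule_iff_isLocalization.mp hlocmod
  have hfeq : algebraMap B0 B = (Algebra.TensorProduct.includeRight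
      (R := R) (A := K) (B := B0)).toRingHom := rfl
  rw [← hfeq]
  -- disjointness of q and M
  have hdisj : Disjoint (M : Set B0) (q : Set B0) := by
    rw [Set.disjoint_left]
    rintro x ⟨r, hr, rfl⟩ hx
    have : r ∈ q.comap (algebraMap R B0) := hx
    rw [hqR] at this
    exact (nonZeroDivisors.ne_zero hr) this
  have hQprime : (q.map (algebraMap B0 B)).IsPrime :=
    IsLocalization.isPrime_of_isPrime_disjoint M B q hqprime hdisj
  refine ⟨hQprime.ne_top, fun J hJ => ?_⟩
  set p : Ideal B0 := J.comap (algebraMap B0 B) with hp'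
  have hqp : q ≤ p := by
    have : q = (q.map (algebraMap B0 B)).comap (algebraMap B0 B) :=
      (IsLocalization.comap_map_of_isPrime_disjoint M B hqprime hdisj).symm
    rw [this]
    exact Ideal.comap_mono hJ.le
  by_cases hpR : p.comap (algebraMap R B0) = ⊥
  · -- contradiction: p ⊓ qbar = q, then p ≤ q or qbar ≤ q
    exfalso
    have hIq : p ⊓ qbar = q := by
      refine hmax _ (le_inf hqp hq) inf_le_right ?_
      rw [eq_bot_iff, ← hpR]
      exact Ideal.comap_mono inf_le_left
    have hmul : p * qbar ≤ q := le_trans Ideal.mul_le_inf hIq.le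
    rcases (Ideal.IsPrime.mul_le hqprime).mp hmul with hpq | hqbarq
    · -- p ≤ q gives J ≤ q.map, contradicting hJ
      have : J = p.map (algebraMap B0 B) := (IsLocalization.map_comap M B J).symm
      exact hJ.2 (this ▸ Ideal.map_mono hpq)
    · -- qbar ≤ q contradicts ℘ ≠ 0
      obtain ⟨π, hπ, hπ0⟩ := Submodule.exists_mem_ne_zero_of_ne_bot hp
      have h1 : algebraMap R B0 π ∈ qbar :=
        hwpq (Ideal.mem_map_of_mem _ hπ)
      have h2 : π ∈ q.comap (algebraMap R B0) := hqbarq h1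
      rw [hqR] at h2
      exact hπ0 h2
  · -- there is a nonzero element of R in p, whose image in B is a unit, so J = ⊤
    obtain ⟨r, hr, hr0⟩ := Submodule.exists_mem_ne_zero_of_ne_bot hpR
    have hmem : algebraMap R B r ∈ J := by
      have : algebraMap B0 B (algebraMap R B0 r) ∈ J := hr
      rwa [← IsScalarTower.algebraMap_apply] at this
    have hunit : IsUnit (algebraMap R B r) := by
      rw [IsScalarTower.algebraMap_apply R K B]
      exact (isUnit_iff_ne_zero.mpr
        (fun h => hr0 ((injective_iff_map_eq_zero _).mp
          (IsFractionRing.injective R K) r h))).map (algebraMap K B)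
    exact J.eq_top_of_isUnit_mem hmem hunit
end
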